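/- Let ν > 0 and let g : ℝ → ℝ be continuous with compact support. Define θ₀(y) = exp(−(1/(2ν)) ∫₀^y g(s) ds) and, for x ∈ ℝ and t > 0, u(x,t) = [∫_{-∞}^{∞} ((x−y)/t) e^{−(x−y)²/(4νt)} θ₀(y) dy] / [∫_{-∞}^{∞} e^{−(x−y)²/(4νt)} θ₀(y) dy]. Then for every x ∈ ℝ, u(x,t) → g(x) as t → 0⁺; that is, the Hopf–Cole formula attains the initial condition u(x,0) = g(x). -/

import Mathlib

open Set MeasureTheory Real Filter
open scoped Topology

-- integrability lemmas
lemma HC.aux_int {b : ℝ} (hb : 0 < b) (x : ℝ) {φ : ℝ → ℝ} (hφ : Continuous φ)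
    {C : ℝ} (hC : ∀ y, |φ y| ≤ C) :
    Integrable (fun y => Real.exp (-b * (x - y) ^ 2) * φ y) := by
  have h1 : Integrable (fun y : ℝ => Real.exp (-b * (x - y) ^ 2)) := by
    have := (integrable_exp_neg_mul_sq hb).comp_sub_right x
    refine this.congr ?_
    filter_upwards with y
    ring_nf
  have := h1.bdd_mul hφ.aestronglyMeasurable (ae_of_all _ fun y => by simpa using hC y)
  simpa [mul_comm] using this

lemma HC.aux_int2 {b : ℝ} (hb : 0 < b) (x : ℝ) {φ : ℝ → ℝ} (hφ : Continuous φ)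
    {C : ℝ} (hC : ∀ y, |φ y| ≤ C) :
    Integrable (fun y => (x - y) * Real.exp (-b * (x - y) ^ 2) * φ y) := by
  have h1 : Integrable (fun y : ℝ => (x - y) * Real.exp (-b * (x - y) ^ 2)) := by
    have := ((integrable_mul_exp_neg_mul_sq hb).comp_sub_right x).neg
    refine this.congr ?_
    filter_upwards with y
    simp only [Pi.neg_apply]
    ring_nf
  have := h1.bdd_mul hφ.aestronglyMeasurable (ae_of_all _ fun y => by simpa using hC y)
  refine this.congr ?_
  filter_upwards with y
  ring

lemma HC.aux_cov {ν t : ℝ} (hν : 0 < ν) (ht : 0 < t) (x : ℝ) (φ : ℝ → ℝ) :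
    ∫ y, Real.exp (-(x - y) ^ 2 / (4 * ν * t)) * φ y
      = Real.sqrt t * ∫ z, Real.exp (-z ^ 2 / (4 * ν)) * φ (x - Real.sqrt t * z) := by
  set Ψ : ℝ → ℝ := fun z => Real.exp (-z ^ 2 / (4 * ν * t)) * φ (x - z) with hΨ
  have h1 : (∫ y, Real.exp (-(x - y) ^ 2 / (4 * ν * t)) * φ y) = ∫ z, Ψ z := by
    rw [← integral_sub_left_eq_self Ψ volume x]
    congr 1; funext y; simp [hΨ]
  have hs : (0:ℝ) < Real.sqrt t := Real.sqrt_pos.mpr ht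
  have h2 : (∫ z, Ψ (Real.sqrt t * z)) = |(Real.sqrt t)⁻¹| • ∫ z, Ψ z :=
    MeasureTheory.Measure.integral_comp_mul_left Ψ _
  rw [abs_of_nonneg (by positivity)] at h2
  have h3 : (∫ z, Ψ z) = Real.sqrt t * ∫ z, Ψ (Real.sqrt t * z) := by
    rw [h2, smul_eq_mul, ← mul_assoc, mul_inv_cancel₀ hs.ne', one_mul]
  rw [h1, h3]
  congr 1
  congr 1; funext z
  have hsq : Real.sqrt t ^ 2 = t := Real.sq_sqrt ht.le
  simp only [hΨ]
  congr 2
  rw [mul_pow, hsq]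
  field_simp

lemma HC.aux_ibp {ν t : ℝ} (hν : 0 < ν) (ht : 0 < t) (x : ℝ) {g θ₀ : ℝ → ℝ}
    (hg : Continuous g) (hθc : Continuous θ₀)
    {C : ℝ} (hC : ∀ y, |θ₀ y| ≤ C) {D : ℝ} (hD : ∀ y, |g y * θ₀ y| ≤ D)
    (hθd : ∀ y, HasDerivAt θ₀ (-(1 / (2 * ν)) * g y * θ₀ y) y) :
    ∫ y, ((x - y) / t) * Real.exp (-(x - y) ^ 2 / (4 * ν * t)) * θ₀ y
      = ∫ y, Real.exp (-(x - y) ^ 2 / (4 * ν * t)) * (g y * θ₀ y) := by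
  have htne : t ≠ 0 := ht.ne'
  have hνne : ν ≠ 0 := hν.ne'
  have hb : (0:ℝ) < (4 * ν * t)⁻¹ := by positivity
  have hexp : ∀ y : ℝ, -(x - y) ^ 2 / (4 * ν * t) = -(4 * ν * t)⁻¹ * (x - y) ^ 2 := by
    intro y; ring
  -- integrability of the two pieces
  have hA : Integrable (fun y => ((x - y) / t) * Real.exp (-(x - y) ^ 2 / (4 * ν * t)) * θ₀ y) := by
    have := ((HC.aux_int2 hb x hθc hC).const_mul t⁻¹)
    refine this.congr ?_
    filter_upwards with y
    rw [hexp y]; ring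
  have hB : Integrable (fun y => Real.exp (-(x - y) ^ 2 / (4 * ν * t)) * (g y * θ₀ y)) := by
    have := HC.aux_int hb x (hg.mul hθc) hD
    refine this.congr ?_
    filter_upwards with y
    rw [hexp y]
    rfl
  -- the antiderivative
  set F : ℝ → ℝ := fun y => (-(2 * ν)) * (Real.exp (-(x - y) ^ 2 / (4 * ν * t)) * θ₀ y) with hF
  set F' : ℝ → ℝ := fun y =>
      Real.exp (-(x - y) ^ 2 / (4 * ν * t)) * (g y * θ₀ y)
      - ((x - y) / t) * Real.exp (-(x - y) ^ 2 / (4 * ν * t)) * θ₀ y with hF'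
  have hder : ∀ y, HasDerivAt F (F' y) y := by
    intro y
    have h0 : HasDerivAt (fun y : ℝ => -(x - y) ^ 2 / (4 * ν * t))
        (-(2 * (x - y) ^ 1 * (0 - 1)) / (4 * ν * t)) y := by
      exact (((hasDerivAt_const y x).sub (hasDerivAt_id y)).pow 2).neg.div_const _
    have h1 := h0.exp
    have h2 := (h1.mul (hθd y)).const_mul (-(2 * ν))
    convert h2 using 1
    · rfl
    · rfl
    · rfl
    simp only [pow_one, hF']
    have e1 : -(2 * ν) * (-(2 * (x - y) * (0 - 1)) / (4 * ν * t)) = -((x - y) / t) := by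
      field_simp
      ring
    have e2 : -(2 * ν) * (-(1 / (2 * ν))) = 1 := by
      field_simp
    linear_combination (-(Real.exp (-(x - y) ^ 2 / (4 * ν * t)) * θ₀ y)) * e1
      + (-(Real.exp (-(x - y) ^ 2 / (4 * ν * t)) * (g y * θ₀ y))) * e2
  have hF'int : Integrable F' := hB.sub hA
  -- limits of F at ±∞
  have hexp0 : ∀ l : Filter ℝ, Tendsto (fun y : ℝ => (x - y) ^ 2) l atTop →
      Tendsto F l (𝓝 0) := by
    intro l hl
    have h4 : Tendsto (fun y : ℝ => -(x - y) ^ 2 / (4 * ν * t)) l atBot := by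
      have := hl.atTop_mul_const_of_neg (r := -(4 * ν * t)⁻¹) (neg_lt_zero.mpr (by positivity))
      refine this.congr fun y => by ring
    have h5 : Tendsto (fun y : ℝ => Real.exp (-(x - y) ^ 2 / (4 * ν * t))) l (𝓝 0) :=
      Real.tendsto_exp_atBot.comp h4
    have h6 : Tendsto (fun y : ℝ => 2 * ν * C * Real.exp (-(x - y) ^ 2 / (4 * ν * t))) l (𝓝 0) := by
      simpa using h5.const_mul (2 * ν * C)
    refine squeeze_zero_norm (fun y => ?_) h6
    have h7 : (0:ℝ) ≤ C := le_trans (abs_nonneg _) (hC 0)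
    have h8 := Real.exp_pos (-(x - y) ^ 2 / (4 * ν * t))
    simp only [hF, Real.norm_eq_abs, abs_mul, abs_neg, abs_of_pos h8,
      abs_of_pos (by positivity : (0:ℝ) < 2 * ν)]
    calc 2 * ν * (Real.exp (-(x - y) ^ 2 / (4 * ν * t)) * |θ₀ y|)
        ≤ 2 * ν * (Real.exp (-(x - y) ^ 2 / (4 * ν * t)) * C) := by
          gcongr; exact hC y
      _ = 2 * ν * C * Real.exp (-(x - y) ^ 2 / (4 * ν * t)) := by ring
  have htop : Tendsto F atTop (𝓝 0) := by
    refine hexp0 _ ?_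
    have h9 : Tendsto (fun y : ℝ => y - x) atTop atTop :=
      tendsto_atTop_add_const_right _ (-x) tendsto_id
    have := (tendsto_pow_atTop (n := 2) (by norm_num)).comp h9
    refine this.congr fun y => by simp [Function.comp]; ring
  have hbot : Tendsto F atBot (𝓝 0) := by
    refine hexp0 _ ?_
    have h9 : Tendsto (fun y : ℝ => x - y) atBot atTop := by
      simp only [sub_eq_add_neg]
      exact tendsto_atTop_add_const_left _ x tendsto_neg_atBot_atTop
    have := (tendsto_pow_atTop (n := 2) (by norm_num)).comp h9
    exact this.congr fun y => by simp [Function.comp]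
  have hzero := integral_of_hasDerivAt_of_tendsto hder hF'int hbot htop
  have h11 : (∫ y, F' y)
      = (∫ y, Real.exp (-(x - y) ^ 2 / (4 * ν * t)) * (g y * θ₀ y))
        - ∫ y, ((x - y) / t) * Real.exp (-(x - y) ^ 2 / (4 * ν * t)) * θ₀ y := integral_sub hB hA
  rw [hzero] at h11
  linarith [h11]

lemma HC.aux_gauss_int {ν : ℝ} (hν : 0 < ν) :
    Integrable (fun z : ℝ => Real.exp (-z ^ 2 / (4 * ν))) := by
  have := integrable_exp_neg_mul_sq (b := (4 * ν)⁻¹) (by positivity)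
  refine this.congr ?_
  filter_upwards with z
  ring_nf

lemma HC.aux_lim {ν : ℝ} (hν : 0 < ν) (x : ℝ) {φ : ℝ → ℝ} (hφ : Continuous φ)
    {C : ℝ} (hC : ∀ y, |φ y| ≤ C) :
    Tendsto (fun t => ∫ z, Real.exp (-z ^ 2 / (4 * ν)) * φ (x - Real.sqrt t * z))
      (nhdsWithin 0 (Ioi 0)) (𝓝 ((∫ z, Real.exp (-z ^ 2 / (4 * ν))) * φ x)) := by
  have hI := HC.aux_gauss_int hν
  have key := tendsto_integral_filter_of_dominated_convergence
    (μ := volume) (l := nhdsWithin (0:ℝ) (Ioi 0))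
    (F := fun t z => Real.exp (-z ^ 2 / (4 * ν)) * φ (x - Real.sqrt t * z))
    (f := fun z => Real.exp (-z ^ 2 / (4 * ν)) * φ x)
    (bound := fun z => Real.exp (-z ^ 2 / (4 * ν)) * C)
    (Eventually.of_forall fun t =>
      ((Real.continuous_exp.comp (by continuity)).mul
        (hφ.comp (by continuity))).aestronglyMeasurable)
    (Eventually.of_forall fun t => ae_of_all _ fun z => by
      have h8 := (Real.exp_pos (-z ^ 2 / (4 * ν))).le
      rw [Real.norm_eq_abs, abs_mul, abs_of_nonneg h8]
      exact mul_le_mul_of_nonneg_left (hC _) h8)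
    (hI.mul_const C)
    (ae_of_all _ fun z => by
      have h1 : Tendsto (fun t : ℝ => x - Real.sqrt t * z) (nhdsWithin 0 (Ioi 0)) (𝓝 x) := by
        have hc : Continuous (fun t : ℝ => x - Real.sqrt t * z) := by continuity
        have := (hc.tendsto 0).mono_left (nhdsWithin_le_nhds (s := Ioi (0:ℝ)))
        simpa using this
      exact ((hφ.tendsto x).comp h1).const_mul _)
  have : (∫ z, Real.exp (-z ^ 2 / (4 * ν)) * φ x)
      = (∫ z, Real.exp (-z ^ 2 / (4 * ν))) * φ x := integral_mul_const _ _
  rwa [this] at key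


/-- **The Hopf–Cole formula attains the initial condition.** For `ν > 0` and `g` continuous
with compact support, the Hopf–Cole solution `u(x,t)` tends to `g(x)` as `t → 0⁺`,
for every `x ∈ ℝ`. -/
theorem hopf_cole_solution_initial_condition
    (ν : ℝ) (hν : 0 < ν)
    (g : ℝ → ℝ) (hcont : Continuous g) (hsupp : HasCompactSupport g)
    (θ₀ : ℝ → ℝ)
    (hθ₀ : ∀ y : ℝ, θ₀ y = Real.exp (-(1 / (2 * ν)) * ∫ s in (0:ℝ)..y, g s))
    (u : ℝ → ℝ → ℝ)
    (hu : ∀ x t : ℝ, 0 < t →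
      u x t = (∫ y : ℝ, ((x - y) / t) * Real.exp (-(x - y) ^ 2 / (4 * ν * t)) * θ₀ y) /
              (∫ y : ℝ, Real.exp (-(x - y) ^ 2 / (4 * ν * t)) * θ₀ y)) :
    ∀ x : ℝ, Tendsto (fun t => u x t) (nhdsWithin 0 (Ioi 0)) (nhds (g x)) := by
  intro x
  have hgint : Integrable g := hcont.integrable_of_hasCompactSupport hsupp
  set H : ℝ → ℝ := fun y => ∫ s in (0:ℝ)..y, g s with hHdef
  set M : ℝ := ∫ s : ℝ, |g s| with hMdef
  have hM0 : 0 ≤ M := integral_nonneg fun s => abs_nonneg _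
  have hHb : ∀ y, |H y| ≤ M := by
    intro y
    have habs : Integrable (fun s : ℝ => |g s|) := hgint.abs
    rcases le_total 0 y with h | h
    · calc |H y| ≤ ∫ s in (0:ℝ)..y, |g s| := intervalIntegral.abs_integral_le_integral_abs h
        _ = ∫ s in Ioc (0:ℝ) y, |g s| := intervalIntegral.integral_of_le h
        _ ≤ M := setIntegral_le_integral habs (ae_of_all _ fun s => abs_nonneg _)
    · have : H y = -∫ s in y..(0:ℝ), g s := by
        exact intervalIntegral.integral_symm y 0
      rw [this, abs_neg]
      calc |∫ s in y..(0:ℝ), g s| ≤ ∫ s in y..(0:ℝ), |g s| :=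
            intervalIntegral.abs_integral_le_integral_abs h
        _ = ∫ s in Ioc y (0:ℝ), |g s| := intervalIntegral.integral_of_le h
        _ ≤ M := setIntegral_le_integral habs (ae_of_all _ fun s => abs_nonneg _)
  have hHcont : Continuous H :=
    intervalIntegral.continuous_primitive (fun a b => hcont.intervalIntegrable a b) 0
  have hθeq : θ₀ = fun y => Real.exp (-(1 / (2 * ν)) * H y) := funext hθ₀
  have hθc : Continuous θ₀ := by
    rw [hθeq]; exact Real.continuous_exp.comp (continuous_const.mul hHcont)
  set C : ℝ := Real.exp (M / (2 * ν)) with hCdef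
  have hCb : ∀ y, |θ₀ y| ≤ C := by
    intro y
    rw [hθ₀ y, abs_of_pos (Real.exp_pos _)]
    apply Real.exp_le_exp.mpr
    calc -(1 / (2 * ν)) * H y ≤ |(-(1 / (2 * ν))) * H y| := le_abs_self _
      _ = (1 / (2 * ν)) * |H y| := by
          rw [abs_mul, abs_neg, abs_of_pos (by positivity : (0:ℝ) < 1 / (2 * ν))]
      _ ≤ (1 / (2 * ν)) * M := by gcongr; exact hHb y
      _ = M / (2 * ν) := by ring
  obtain ⟨Cg, hCg⟩ : ∃ Cg, ∀ y, ‖g y‖ ≤ Cg := hsupp.exists_bound_of_continuous hcont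
  have hDb : ∀ y, |g y * θ₀ y| ≤ Cg * C := by
    intro y
    rw [abs_mul]
    have h1 : (0:ℝ) ≤ Cg := le_trans (norm_nonneg _) (hCg 0)
    have h2 : (0:ℝ) ≤ C := le_trans (abs_nonneg _) (hCb 0)
    exact mul_le_mul (hCg y) (hCb y) (abs_nonneg _) h1
  have hθd : ∀ y, HasDerivAt θ₀ (-(1 / (2 * ν)) * g y * θ₀ y) y := by
    intro y
    have hH' : HasDerivAt H (g y) y :=
      intervalIntegral.integral_hasDerivAt_right (hcont.intervalIntegrable _ _)
        hcont.stronglyMeasurable.stronglyMeasurableAtFilter hcont.continuousAt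
    have := ((hH'.const_mul (-(1 / (2 * ν)))).exp)
    rw [← hθeq] at this
    convert this using 1
    rw [hθ₀ y]; ring
  -- the two rescaled integrals
  set A : ℝ → ℝ := fun t => ∫ z, Real.exp (-z ^ 2 / (4 * ν)) * (g (x - Real.sqrt t * z) * θ₀ (x - Real.sqrt t * z)) with hAdef
  set B : ℝ → ℝ := fun t => ∫ z, Real.exp (-z ^ 2 / (4 * ν)) * θ₀ (x - Real.sqrt t * z) with hBdef
  have heq : (fun t => u x t) =ᶠ[nhdsWithin 0 (Ioi 0)] fun t => A t / B t := by
    filter_upwards [self_mem_nhdsWithin] with t ht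
    have ht' : (0:ℝ) < t := ht
    have hs : Real.sqrt t ≠ 0 := (Real.sqrt_pos.mpr ht').ne'
    rw [hu x t ht', HC.aux_ibp hν ht' x hcont hθc hCb hDb hθd,
      HC.aux_cov hν ht' x (fun y => g y * θ₀ y), HC.aux_cov hν ht' x θ₀,
      mul_div_mul_left _ _ hs]
  set I : ℝ := ∫ z : ℝ, Real.exp (-z ^ 2 / (4 * ν)) with hIdef
  have hIpos : 0 < I := by
    have h1 : I = Real.sqrt (π / (4 * ν)⁻¹) := by
      rw [hIdef, ← integral_gaussian ((4 * ν)⁻¹)]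
      congr 1; funext z; congr 1; ring
    rw [h1]
    apply Real.sqrt_pos.mpr
    positivity
  have hθx : 0 < θ₀ x := by rw [hθ₀ x]; exact Real.exp_pos _
  have hA : Tendsto A (nhdsWithin 0 (Ioi 0)) (𝓝 (I * (g x * θ₀ x))) :=
    HC.aux_lim hν x (hcont.mul hθc) hDb
  have hB : Tendsto B (nhdsWithin 0 (Ioi 0)) (𝓝 (I * θ₀ x)) :=
    HC.aux_lim hν x hθc hCb
  have hne : I * θ₀ x ≠ 0 := by positivity
  have hdiv := hA.div hB hne
  have hval : I * (g x * θ₀ x) / (I * θ₀ x) = g x := by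
    field_simp
  rw [hval] at hdiv
  exact hdiv.congr' heq.symm
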